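/- Let b be a C^1 vector field on R^d such that k̃(x) := -sup{u·∇b(x)u : |u|=1} satisfies k̃(x) ≥ -K for all x and k̃(x) ≥ c for all |x| ≥ R, where K, R ≥ 0 and c > 0. Then k(x) := -sup_{y≠x} (x-y)·(b(x)-b(y))/|x-y|² satisfies k(x) ≥ -K for all x, and k(x) ≥ c/2 for all x with |x| ≥ R(4(K+c)/c - 1). -/

import Mathlib

open MeasureTheory Real
open scoped RealInnerProductSpace

section stmt2aux

variable {d : ℕ}

private lemma stmt2_quad_bound (b : EuclideanSpace ℝ (Fin d) → EuclideanSpace ℝ (Fin d))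
    (ktilde : EuclideanSpace ℝ (Fin d) → ℝ)
    (hktilde : ∀ x, ktilde x =
      -sSup {r : ℝ | ∃ u : EuclideanSpace ℝ (Fin d), ‖u‖ = 1 ∧ r = ⟪u, fderiv ℝ b x u⟫})
    (z v : EuclideanSpace ℝ (Fin d)) (hv : v ≠ 0) :
    ⟪v, fderiv ℝ b z v⟫ ≤ -ktilde z * ‖v‖ ^ 2 := by
  set A := fderiv ℝ b z with hA
  set u := ‖v‖⁻¹ • v with hu
  have hun : ‖u‖ = 1 := norm_smul_inv_norm hv
  have hbdd : BddAbove {r : ℝ | ∃ u : EuclideanSpace ℝ (Fin d), ‖u‖ = 1 ∧ r = ⟪u, A u⟫} := by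
    refine ⟨‖A‖, ?_⟩
    rintro r ⟨w, hw, rfl⟩
    calc ⟪w, A w⟫ ≤ ‖w‖ * ‖A w‖ := real_inner_le_norm _ _
      _ ≤ ‖w‖ * (‖A‖ * ‖w‖) := by
          gcongr; exact A.le_opNorm w
      _ = ‖A‖ := by rw [hw]; ring
  have hle : ⟪u, A u⟫ ≤ -ktilde z := by
    rw [hktilde z, neg_neg]
    exact le_csSup hbdd ⟨u, hun, rfl⟩
  have hvu : ‖v‖ • u = v := smul_inv_smul₀ (norm_ne_zero_iff.2 hv) v
  have hcalc : ⟪v, A v⟫ = ‖v‖ ^ 2 * ⟪u, A u⟫ := by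
    conv_lhs => rw [← hvu]
    rw [A.map_smul, real_inner_smul_left, real_inner_smul_right]
    ring
  rw [hcalc]
  calc ‖v‖ ^ 2 * ⟪u, A u⟫ ≤ ‖v‖ ^ 2 * (-ktilde z) :=
        mul_le_mul_of_nonneg_left hle (sq_nonneg _)
    _ = -ktilde z * ‖v‖ ^ 2 := by ring

private lemma stmt2_ftc (b : EuclideanSpace ℝ (Fin d) → EuclideanSpace ℝ (Fin d))
    (hb : ContDiff ℝ 1 b) (x y : EuclideanSpace ℝ (Fin d)) :
    ⟪x - y, b x - b y⟫ =
      ∫ t in (0:ℝ)..1, ⟪x - y, fderiv ℝ b (x + t • (y - x)) (x - y)⟫ := by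
  have hz : ∀ t : ℝ, HasDerivAt (fun t : ℝ => x + t • (y - x)) (y - x) t := by
    intro t
    simpa using ((hasDerivAt_id t).smul_const (y - x)).const_add x
  have hF : ∀ t : ℝ, HasDerivAt (fun t : ℝ => ⟪x - y, b (x + t • (y - x))⟫)
      ⟪x - y, fderiv ℝ b (x + t • (y - x)) (y - x)⟫ t := by
    intro t
    have hb' : HasFDerivAt b (fderiv ℝ b (x + t • (y - x))) (x + t • (y - x)) :=
      (hb.differentiable one_ne_zero _).hasFDerivAt
    have hc := hb'.comp_hasDerivAt t (hz t)
    have := (hasDerivAt_const t (x - y)).inner (𝕜 := ℝ) hc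
    simpa using this
  have hcont : Continuous fun t : ℝ => ⟪x - y, fderiv ℝ b (x + t • (y - x)) (y - x)⟫ := by
    apply continuous_const.inner
    exact (((hb.continuous_fderiv one_ne_zero).comp (by continuity)).clm_apply continuous_const)
  have key := intervalIntegral.integral_eq_sub_of_hasDerivAt (fun t _ => hF t)
    (hcont.intervalIntegrable 0 1)
  have h1 : x + (1:ℝ) • (y - x) = y := by simp
  have h0 : x + (0:ℝ) • (y - x) = x := by simp
  rw [h1, h0] at key
  have hneg : ∀ w, (⟪x - y, fderiv ℝ b w (x - y)⟫ : ℝ)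
      = -⟪x - y, fderiv ℝ b w (y - x)⟫ := by
    intro w
    have : (fderiv ℝ b w) (x - y) = -((fderiv ℝ b w) (y - x)) := by
      rw [← map_neg]; congr 1; abel
    rw [this, inner_neg_right]
  calc ⟪x - y, b x - b y⟫ = -(⟪x - y, b y⟫ - ⟪x - y, b x⟫) := by
        rw [inner_sub_right]; ring
    _ = -∫ t in (0:ℝ)..1, ⟪x - y, fderiv ℝ b (x + t • (y - x)) (y - x)⟫ := by rw [key]
    _ = ∫ t in (0:ℝ)..1, ⟪x - y, fderiv ℝ b (x + t • (y - x)) (x - y)⟫ := by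
        rw [← intervalIntegral.integral_neg]
        congr 1; funext t; rw [hneg]

private lemma stmt2_elem_int (b : EuclideanSpace ℝ (Fin d) → EuclideanSpace ℝ (Fin d))
    (hb : ContDiff ℝ 1 b)
    (ktilde : EuclideanSpace ℝ (Fin d) → ℝ)
    (hktilde : ∀ x, ktilde x =
      -sSup {r : ℝ | ∃ u : EuclideanSpace ℝ (Fin d), ‖u‖ = 1 ∧ r = ⟪u, fderiv ℝ b x u⟫})
    (x y : EuclideanSpace ℝ (Fin d)) (hy : y ≠ x) (φ : ℝ → ℝ)
    (hφ : IntervalIntegrable φ volume 0 1)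
    (hbound : ∀ t ∈ Set.Icc (0:ℝ) 1, -ktilde (x + t • (y - x)) ≤ φ t) :
    ⟪x - y, b x - b y⟫ / ‖x - y‖ ^ 2 ≤ ∫ t in (0:ℝ)..1, φ t := by
  have hv : x - y ≠ 0 := sub_ne_zero.2 (Ne.symm hy)
  have hL2 : (0:ℝ) < ‖x - y‖ ^ 2 := pow_pos (norm_pos_iff.2 hv) 2
  rw [div_le_iff₀ hL2, stmt2_ftc b hb x y]
  have hcont : Continuous fun t : ℝ => ⟪x - y, fderiv ℝ b (x + t • (y - x)) (x - y)⟫ := by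
    apply continuous_const.inner
    exact (((hb.continuous_fderiv one_ne_zero).comp (by continuity)).clm_apply continuous_const)
  calc (∫ t in (0:ℝ)..1, ⟪x - y, fderiv ℝ b (x + t • (y - x)) (x - y)⟫)
      ≤ ∫ t in (0:ℝ)..1, φ t * ‖x - y‖ ^ 2 := by
        apply intervalIntegral.integral_mono_on zero_le_one
          (hcont.intervalIntegrable 0 1) (hφ.mul_const _)
        intro t ht
        calc ⟪x - y, fderiv ℝ b (x + t • (y - x)) (x - y)⟫
            ≤ -ktilde (x + t • (y - x)) * ‖x - y‖ ^ 2 :=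
              stmt2_quad_bound b ktilde hktilde _ _ hv
          _ ≤ φ t * ‖x - y‖ ^ 2 :=
              mul_le_mul_of_nonneg_right (hbound t ht) (sq_nonneg _)
    _ = (∫ t in (0:ℝ)..1, φ t) * ‖x - y‖ ^ 2 := intervalIntegral.integral_mul_const _ _

private lemma stmt2_lam_bound (x v : EuclideanSpace ℝ (Fin d)) (hv : v ≠ 0) {R : ℝ}
    (hR : 0 < R) (hxR : 3 * R ≤ ‖x‖) :
    (volume ({t : ℝ | ‖x + t • v‖ < R} ∩ Set.Ioc 0 1)).toReal * (‖x‖ + R) ≤ 2 * R := by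
  set X := ‖x‖ with hX
  set L := ‖v‖ with hLdef
  have hL : 0 < L := norm_pos_iff.2 hv
  set T := Set.Icc (0:ℝ) 1 ∩ {t : ℝ | ‖x + t • v‖ < R} with hT
  have hsub : {t : ℝ | ‖x + t • v‖ < R} ∩ Set.Ioc 0 1 ⊆ T := by
    rintro t ⟨h1, h2⟩
    exact ⟨⟨h2.1.le, h2.2⟩, h1⟩
  have hTIcc : T ⊆ Set.Icc 0 1 := Set.inter_subset_left
  have hlam0 : (0:ℝ) ≤ (volume ({t : ℝ | ‖x + t • v‖ < R} ∩ Set.Ioc 0 1)).toReal :=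
    ENNReal.toReal_nonneg
  by_cases hne : T.Nonempty
  · have hbddA : BddAbove T := BddAbove.mono hTIcc bddAbove_Icc
    have hbddB : BddBelow T := BddBelow.mono hTIcc bddBelow_Icc
    set m := sInf T with hm
    set M := sSup T with hM
    have hm0 : 0 ≤ m := le_csInf hne fun t ht => (hTIcc ht).1
    have hM1 : M ≤ 1 := csSup_le hne fun t ht => (hTIcc ht).2
    have hmM : m ≤ M := csInf_le_csSup hne hbddB hbddA
    have hlow : ∀ t ∈ T, X - R ≤ t * L := by
      rintro t ⟨⟨ht0, _⟩, ht⟩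
      have h1 : X ≤ ‖x + t • v‖ + ‖t • v‖ := by
        calc X = ‖(x + t • v) - t • v‖ := by simp [hX]
          _ ≤ ‖x + t • v‖ + ‖t • v‖ := norm_sub_le _ _
      have h2 : ‖t • v‖ = t * L := by
        rw [norm_smul, Real.norm_eq_abs, abs_of_nonneg ht0]
      simp only [Set.mem_setOf_eq] at ht
      linarith
    have hmL : X - R ≤ m * L := by
      have : (X - R) / L ≤ m := le_csInf hne fun t ht => (div_le_iff₀ hL).2 (hlow t ht)
      exact (div_le_iff₀ hL).1 this
    have hdiam : ∀ t ∈ T, ∀ s ∈ T, (t - s) * L ≤ 2 * R := by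
      intro t ht s hs
      have h1 : ‖(t - s) • v‖ ≤ 2 * R := by
        have e : (t - s) • v = (x + t • v) - (x + s • v) := by
          rw [sub_smul]; abel
        rw [e]
        have := norm_sub_le (x + t • v) (x + s • v)
        have h2 := ht.2; have h3 := hs.2
        simp only [Set.mem_setOf_eq] at h2 h3
        linarith
      have h2 : |t - s| * L ≤ 2 * R := by
        rwa [norm_smul, Real.norm_eq_abs] at h1
      calc (t - s) * L ≤ |t - s| * L :=
            mul_le_mul_of_nonneg_right (le_abs_self _) hL.le
        _ ≤ 2 * R := h2
    have hMm : (M - m) * L ≤ 2 * R := by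
      have hM' : M ≤ m + 2 * R / L := by
        refine csSup_le hne fun t ht => ?_
        have : t - 2 * R / L ≤ m := by
          refine le_csInf hne fun s hs => ?_
          have := (le_div_iff₀ hL).2 (hdiam t ht s hs)
          linarith
        linarith
      have : M - m ≤ 2 * R / L := by linarith
      exact (le_div_iff₀ hL).1 this
    have hvolT : (volume T).toReal ≤ M - m := by
      have hmono : volume T ≤ volume (Set.Icc m M) :=
        measure_mono (fun t ht => ⟨csInf_le hbddB ht, le_csSup hbddA ht⟩)
      rw [Real.volume_Icc] at hmono
      calc (volume T).toReal ≤ (ENNReal.ofReal (M - m)).toReal :=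
            ENNReal.toReal_mono ENNReal.ofReal_ne_top hmono
        _ = M - m := ENNReal.toReal_ofReal (by linarith)
    have hTne : volume T ≠ ⊤ := by
      refine ne_top_of_le_ne_top ?_ (measure_mono hTIcc)
      simp [Real.volume_Icc]
    have hlamT : (volume ({t : ℝ | ‖x + t • v‖ < R} ∩ Set.Ioc 0 1)).toReal ≤ (volume T).toReal :=
      ENNReal.toReal_mono hTne (measure_mono hsub)
    have hlamD : (volume ({t : ℝ | ‖x + t • v‖ < R} ∩ Set.Ioc 0 1)).toReal ≤ M - m :=
      le_trans hlamT hvolT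
    have hD0 : 0 ≤ M - m := by linarith
    have h1D : 0 ≤ 1 - (M - m) := by linarith
    have hDL : 0 ≤ (M - m) * L := mul_nonneg hD0 hL.le
    have p1 : (M - m) * (X - R) ≤ (M - m) * (m * L) := mul_le_mul_of_nonneg_left hmL hD0
    have p2 : (M - m) * (m * L) ≤ ((M - m) * L) * (1 - (M - m)) := by nlinarith [hDL, hM1]
    have p3 : ((M - m) * L) * (1 - (M - m)) ≤ (2 * R) * (1 - (M - m)) :=
      mul_le_mul_of_nonneg_right hMm h1D
    nlinarith [p1, p2, p3, mul_le_mul_of_nonneg_right hlamD (by linarith : (0:ℝ) ≤ X + R)]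
  · rw [Set.not_nonempty_iff_eq_empty] at hne
    have : {t : ℝ | ‖x + t • v‖ < R} ∩ Set.Ioc 0 1 = ∅ :=
      Set.eq_empty_of_subset_empty (hne ▸ hsub)
    rw [this]
    simp
    positivity

end stmt2aux

set_option maxHeartbeats 1000000 in
theorem stmt2 {d : ℕ}
    (b : EuclideanSpace ℝ (Fin d) → EuclideanSpace ℝ (Fin d))
    (hb : ContDiff ℝ 1 b)
    (K R c : ℝ) (hK : 0 ≤ K) (hR : 0 ≤ R) (hc : 0 < c)
    (ktilde k : EuclideanSpace ℝ (Fin d) → ℝ)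
    (hktilde : ∀ x, ktilde x =
      -sSup {r : ℝ | ∃ u : EuclideanSpace ℝ (Fin d), ‖u‖ = 1 ∧ r = ⟪u, fderiv ℝ b x u⟫})
    (hk : ∀ x, k x =
      -sSup {r : ℝ | ∃ y : EuclideanSpace ℝ (Fin d), y ≠ x ∧
        r = ⟪x - y, b x - b y⟫ / ‖x - y‖ ^ 2})
    (h1 : ∀ x, -K ≤ ktilde x)
    (h2 : ∀ x, R ≤ ‖x‖ → c ≤ ktilde x) :
    (∀ x, -K ≤ k x) ∧
      (∀ x, R * (4 * (K + c) / c - 1) ≤ ‖x‖ → c / 2 ≤ k x) := by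
  constructor
  · intro x
    rw [hk x]
    have hsup : sSup {r : ℝ | ∃ y : EuclideanSpace ℝ (Fin d), y ≠ x ∧
        r = ⟪x - y, b x - b y⟫ / ‖x - y‖ ^ 2} ≤ K := by
      apply Real.sSup_le ?_ hK
      rintro r ⟨y, hy, rfl⟩
      have := stmt2_elem_int b hb ktilde hktilde x y hy (fun _ => K)
        intervalIntegrable_const
        (fun t _ => by linarith [h1 (x + t • (y - x))])
      simpa using this
    linarith
  · intro x hx
    have hfac : (3:ℝ) ≤ 4 * (K + c) / c - 1 := by
      rw [le_sub_iff_add_le, le_div_iff₀ hc]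
      linarith
    have h3R : 3 * R ≤ ‖x‖ := le_trans (by nlinarith) hx
    rcases eq_or_ne d 0 with hd | hd
    · exfalso
      subst hd
      have hx0 : ‖x‖ = 0 := by rw [Subsingleton.elim x 0]; simp
      have hR0 : R = 0 := by nlinarith
      have hc2 := h2 x (by rw [hx0, hR0])
      have hset : {r : ℝ | ∃ u : EuclideanSpace ℝ (Fin 0), ‖u‖ = 1 ∧
          r = ⟪u, fderiv ℝ b x u⟫} = ∅ := by
        ext r
        simp only [Set.mem_setOf_eq, Set.mem_empty_iff_false, iff_false, not_exists]
        rintro u ⟨hu, -⟩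
        rw [Subsingleton.elim u 0] at hu
        simp at hu
      rw [hktilde x, hset, Real.sSup_empty] at hc2
      linarith
    · have hd1 : 0 < d := Nat.pos_of_ne_zero hd
      have hsingle : ‖EuclideanSpace.single (⟨0, hd1⟩ : Fin d) (1:ℝ)‖ = 1 := by
        rw [EuclideanSpace.norm_single]; simp
      have hy₀x : x + EuclideanSpace.single (⟨0, hd1⟩ : Fin d) (1:ℝ) ≠ x := by
        intro h
        have h' : EuclideanSpace.single (⟨0, hd1⟩ : Fin d) (1:ℝ) = 0 :=
          add_eq_left.1 h
        rw [h'] at hsingle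
        simp at hsingle
      have helem : ∀ y : EuclideanSpace ℝ (Fin d), y ≠ x →
          ⟪x - y, b x - b y⟫ / ‖x - y‖ ^ 2 ≤ -(c / 2) := by
        intro y hy
        set S := {t : ℝ | ‖x + t • (y - x)‖ < R} with hS
        have hSopen : IsOpen S := isOpen_lt (by continuity) continuous_const
        set lam := (volume (S ∩ Set.Ioc 0 1)).toReal with hlam
        have hlamnn : 0 ≤ lam := ENNReal.toReal_nonneg
        have hind : IntervalIntegrable (S.indicator fun _ => (1:ℝ)) volume 0 1 := by
          rw [intervalIntegrable_iff_integrableOn_Ioc_of_le zero_le_one]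
          exact ((MeasureTheory.integrableOn_const_iff (C := (1:ℝ))).2
            (Or.inr measure_Ioc_lt_top)).indicator hSopen.measurableSet
        set φ : ℝ → ℝ := fun t => (K + c) * S.indicator (fun _ => (1:ℝ)) t - c with hφdef
        have hφ : IntervalIntegrable φ volume 0 1 :=
          (hind.const_mul _).sub intervalIntegrable_const
        have hbound : ∀ t ∈ Set.Icc (0:ℝ) 1, -ktilde (x + t • (y - x)) ≤ φ t := by
          intro t _
          by_cases hts : t ∈ S
          · simp only [hφdef, Set.indicator_of_mem hts]
            have := h1 (x + t • (y - x))
            simp only [mul_one]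
            linarith
          · simp only [hφdef, Set.indicator_of_notMem hts]
            have hnorm : R ≤ ‖x + t • (y - x)‖ := not_lt.1 hts
            have := h2 _ hnorm
            simp only [mul_zero]
            linarith
        have hintval : ∫ t in (0:ℝ)..1, φ t = (K + c) * lam - c := by
          have hindval : ∫ t in (0:ℝ)..1, S.indicator (fun _ => (1:ℝ)) t = lam := by
            rw [intervalIntegral.integral_of_le zero_le_one,
              MeasureTheory.setIntegral_indicator hSopen.measurableSet,
              MeasureTheory.setIntegral_const]
            rw [Set.inter_comm]
            simp [hlam, measureReal_def]
          rw [hφdef]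
          rw [intervalIntegral.integral_sub (hind.const_mul _) intervalIntegrable_const,
            intervalIntegral.integral_const_mul, hindval, intervalIntegral.integral_const]
          simp
        have hlamb : (K + c) * lam ≤ c / 2 := by
          rcases eq_or_lt_of_le hR with hR0 | hR0
          · have hSe : S = ∅ := by
              ext t
              simp only [hS, Set.mem_setOf_eq, Set.mem_empty_iff_false, iff_false, not_lt,
                ← hR0]
              exact norm_nonneg _
            have : lam = 0 := by rw [hlam, hSe]; simp
            rw [this]
            simp
            linarith
          · have hvz : y - x ≠ 0 := sub_ne_zero.2 hy
            have hgeo := stmt2_lam_bound x (y - x) hvz hR0 h3R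
            rw [← hlam] at hgeo
            have hcX : 4 * R * (K + c) ≤ c * (‖x‖ + R) := by
              have h' : c * (R * (4 * (K + c) / c - 1)) ≤ c * ‖x‖ :=
                mul_le_mul_of_nonneg_left hx hc.le
              have hcc : c ≠ 0 := hc.ne'
              field_simp at h'
              nlinarith [h']
            have hXR : 0 < ‖x‖ + R := by nlinarith
            have hKc : 0 < K + c := by linarith
            nlinarith [mul_le_mul_of_nonneg_left hgeo hKc.le, hXR, hlamnn]
        have hle := stmt2_elem_int b hb ktilde hktilde x y hy φ hφ hbound
        rw [hintval] at hle
        linarith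
      have hsup : sSup {r : ℝ | ∃ y : EuclideanSpace ℝ (Fin d), y ≠ x ∧
          r = ⟪x - y, b x - b y⟫ / ‖x - y‖ ^ 2} ≤ -(c / 2) := by
        have hne : {r : ℝ | ∃ y : EuclideanSpace ℝ (Fin d), y ≠ x ∧
            r = ⟪x - y, b x - b y⟫ / ‖x - y‖ ^ 2}.Nonempty :=
          ⟨_, ⟨x + EuclideanSpace.single (⟨0, hd1⟩ : Fin d) (1:ℝ), hy₀x, rfl⟩⟩
        apply csSup_le hne
        rintro r ⟨y, hy, rfl⟩
        exact helem y hy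
      rw [hk x]
      linarith
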